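/- A weakly reversible prime reaction network has no critical siphons: if (S, R) is weakly reversible and its associated ideal is prime, then no siphon T ⊆ S is critical. -/

import Mathlib

/- STATEMENT 6: A weakly reversible reaction network whose associated binomial
   ideal is prime has no critical siphons. -/

open scoped BigOperators

noncomputable section

/-- A reaction `y → y'` over a species set `S`. -/
abbrev Reaction (S : Type) := (S → ℕ) × (S → ℕ)

variable {S : Type} [Fintype S] [DecidableEq S]

/-- Weak reversibility: every reaction can be reversed by a chain of reactions. -/
def WeaklyReversible (R : Finset (Reaction S)) : Prop :=
  ∀ r ∈ R, ∃ n : ℕ, ∃ c : Fin (n + 1) → (S → ℕ),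
    c 0 = r.2 ∧ c (Fin.last n) = r.1 ∧
    ∀ i : Fin n, (c i.castSucc, c i.succ) ∈ R

/-- The stoichiometric subspace `H`, spanned by the reaction vectors `y' - y`. -/
def stoichSubspace (R : Finset (Reaction S)) : Submodule ℝ (S → ℝ) :=
  Submodule.span ℝ {v | ∃ r ∈ R, v = fun i => ((r.2 i : ℝ) - (r.1 i : ℝ))}

/-- A (nonempty) siphon. -/
def IsSiphon (R : Finset (Reaction S)) (T : Set S) : Prop :=
  T.Nonempty ∧ ∀ r ∈ R, (∃ i ∈ T, 0 < r.2 i) → ∃ j ∈ T, 0 < r.1 j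

/-- A critical siphon: a siphon `T` such that the only nonnegative vector of
    `H^⊥` supported on `T` is `0`. -/
def IsCriticalSiphon (R : Finset (Reaction S)) (T : Set S) : Prop :=
  IsSiphon R T ∧ ∀ v : S → ℝ,
    (∀ h ∈ stoichSubspace R, ∑ i, v i * h i = 0) →
    (∀ i, 0 ≤ v i) → (∀ i, i ∉ T → v i = 0) → v = 0

/-- The associated ideal of a reaction network: the ideal of `ℂ[x_i : i ∈ S]`
    generated by the binomials `x^y - x^{y'}` for reactions `y → y'`. -/
def associatedIdeal (R : Finset (Reaction S)) : Ideal (MvPolynomial S ℂ) :=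
  Ideal.span {f | ∃ r ∈ R,
    f = (∏ i, MvPolynomial.X i ^ r.1 i) - ∏ i, MvPolynomial.X i ^ r.2 i}


set_option linter.unusedSectionVars false

open MvPolynomial in
lemma binom_mem_of_list (R : Finset (Reaction S)) (l : List (Reaction S))
    (hl : ∀ p ∈ l, p ∈ R ∨ (p.2, p.1) ∈ R) :
    ∃ a b : S → ℕ,
      (∀ i, (a i : ℤ) - b i = (l.map (fun p => (p.2 i : ℤ) - p.1 i)).sum) ∧
      ((∏ i, X i ^ a i) - ∏ i, X i ^ b i : MvPolynomial S ℂ) ∈ associatedIdeal R := by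
  induction l with
  | nil =>
    refine ⟨0, 0, fun i => by simp, by simp⟩
  | cons p l ih =>
    obtain ⟨a, b, hab, hmem⟩ := ih (fun p hp => hl p (List.mem_cons_of_mem _ hp))
    refine ⟨fun i => a i + p.2 i, fun i => b i + p.1 i, fun i => ?_, ?_⟩
    · have := hab i
      simp only [List.map_cons, List.sum_cons]
      push_cast
      linarith
    · have hgen : ((∏ i, X i ^ p.2 i) - ∏ i, X i ^ p.1 i : MvPolynomial S ℂ)
          ∈ associatedIdeal R := by
        rcases hl p (List.mem_cons_self (a := p) (l := l)) with hp | hp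
        · have : ((∏ i, X i ^ p.1 i) - ∏ i, X i ^ p.2 i : MvPolynomial S ℂ)
              ∈ associatedIdeal R := Ideal.subset_span ⟨p, hp, rfl⟩
          simpa using (associatedIdeal R).neg_mem this
        · exact Ideal.subset_span ⟨(p.2, p.1), hp, rfl⟩
      have hA : (∏ i, X i ^ (a i + p.2 i) : MvPolynomial S ℂ)
          = (∏ i, X i ^ a i) * ∏ i, X i ^ p.2 i := by
        rw [← Finset.prod_mul_distrib]
        exact Finset.prod_congr rfl (fun i _ => pow_add _ _ _)
      have hB : (∏ i, X i ^ (b i + p.1 i) : MvPolynomial S ℂ)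
          = (∏ i, X i ^ b i) * ∏ i, X i ^ p.1 i := by
        rw [← Finset.prod_mul_distrib]
        exact Finset.prod_congr rfl (fun i _ => pow_add _ _ _)
      rw [hA, hB]
      have hid : ((∏ i, X i ^ a i) * ∏ i, X i ^ p.2 i)
            - ((∏ i, X i ^ b i) * ∏ i, X i ^ p.1 i)
          = (∏ i, X i ^ p.2 i) * ((∏ i, X i ^ a i) - ∏ i, X i ^ b i)
            + (∏ i, X i ^ b i) * ((∏ i, X i ^ p.2 i) - (∏ i, X i ^ p.1 i) : MvPolynomial S ℂ) := by
        ring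
      rw [hid]
      exact (associatedIdeal R).add_mem
        (Ideal.mul_mem_left _ _ hmem) (Ideal.mul_mem_left _ _ hgen)


lemma list_sum_flatMap {α : Type*} (l : List α) (f : α → List ℤ) :
    (l.flatMap f).sum = (l.map fun a => (f a).sum).sum := by
  induction l with
  | nil => simp
  | cons a l ih => simp [ih]


open MvPolynomial in
lemma binom_mem_of_int (R : Finset (Reaction S))
    (m : {r : Reaction S // r ∈ R} → ℤ) :
    ∃ a b : S → ℕ,
      (∀ i, (a i : ℤ) - b i
        = ∑ r : {r : Reaction S // r ∈ R}, m r * ((r.1.2 i : ℤ) - (r.1.1 i : ℤ))) ∧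
      ((∏ i, X i ^ a i) - ∏ i, X i ^ b i : MvPolynomial S ℂ) ∈ associatedIdeal R := by
  classical
  set l : List (Reaction S) := (Finset.univ : Finset {r : Reaction S // r ∈ R}).toList.flatMap
    (fun r => List.replicate (m r).natAbs (if 0 ≤ m r then r.1 else (r.1.2, r.1.1))) with hldef
  have hl : ∀ p ∈ l, p ∈ R ∨ (p.2, p.1) ∈ R := by
    intro p hp
    rw [hldef, List.mem_flatMap] at hp
    obtain ⟨r, _, hpr⟩ := hp
    have := List.eq_of_mem_replicate hpr
    subst this
    split
    · exact Or.inl r.2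
    · exact Or.inr r.2
  obtain ⟨a, b, hab, hmem⟩ := binom_mem_of_list R l hl
  refine ⟨a, b, fun i => ?_, hmem⟩
  rw [hab i, hldef, List.map_flatMap, list_sum_flatMap]
  have hkey : ∀ r : {r : Reaction S // r ∈ R}, ((List.replicate (m r).natAbs
        (if 0 ≤ m r then r.1 else (r.1.2, r.1.1))).map
        (fun p => (p.2 i : ℤ) - p.1 i)).sum = m r * ((r.1.2 i : ℤ) - (r.1.1 i : ℤ)) := by
    intro r
    rw [List.map_replicate, List.sum_replicate, nsmul_eq_mul]
    split
    · next h =>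
      rw [show (((m r).natAbs : ℤ)) = m r from Int.natAbs_of_nonneg h]
    · next h =>
      have : (((m r).natAbs : ℤ)) = -(m r) := by omega
      rw [this]
      ring
  simp only [Function.comp, hkey]
  rw [Finset.sum_map_toList]

lemma exists_pos_combination (R : Finset (Reaction S)) (T : Set S) (hT : T.Nonempty)
    (hcrit : ∀ v : S → ℝ, (∀ h ∈ stoichSubspace R, ∑ i, v i * h i = 0) →
      (∀ i, 0 ≤ v i) → (∀ i, i ∉ T → v i = 0) → v = 0) :
    ∃ h : S → ℝ, h ∈ stoichSubspace R ∧ ∀ i ∈ T, 0 < h i := by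
  classical
  set E := EuclideanSpace ℝ S with hE
  set A : Set E := {v | ∃ r ∈ R, v = fun i => ((r.2 i : ℝ) - (r.1 i : ℝ))} with hA
  set B : Set E := {v | ∃ j, j ∉ T ∧ v = EuclideanSpace.single j 1} with hB
  set K : Submodule ℝ E := Submodule.span ℝ (A ∪ B) with hK
  set f : E →L[ℝ] E := K.subtypeL.comp (K.orthogonalProjectionOnto) with hf
  have hfK : ∀ x : E, f x ∈ K := fun x => ((K.orthogonalProjectionOnto) x).2
  have hspanA : (Submodule.span ℝ A).map (WithLp.linearEquiv 2 ℝ (S → ℝ)).toLinearMap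
      = stoichSubspace R := by
    rw [Submodule.map_span, stoichSubspace]
    congr 1
    ext x
    constructor
    · rintro ⟨y, ⟨r, hr, hy⟩, rfl⟩; exact ⟨r, hr, hy⟩
    · rintro ⟨r, hr, rfl⟩; exact ⟨WithLp.toLp 2 _, ⟨r, hr, rfl⟩, rfl⟩
  set Δ : Set E := WithLp.ofLp ⁻¹' stdSimplex ℝ S with hΔ
  set C : Set E := f '' Δ with hC
  have hCcompact : IsCompact C := ((PiLp.homeomorph 2 _).isCompact_preimage.mpr (isCompact_stdSimplex ℝ S)).image f.continuous
  have hCconv : Convex ℝ C := ((convex_stdSimplex ℝ S).linear_preimage (WithLp.linearEquiv 2 ℝ (S → ℝ)).toLinearMap).linear_image f.toLinearMap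
  obtain ⟨i₀, hi₀⟩ := hT
  have hΔne : Δ.Nonempty := ⟨WithLp.toLp 2 (fun j => if j = i₀ then (1:ℝ) else 0), by
    constructor
    · intro j; dsimp only; split <;> norm_num
    · simp⟩
  have hCne : C.Nonempty := hΔne.image f
  -- 0 ∉ C
  have h0C : (0 : E) ∉ C := by
    rintro ⟨v, hvΔ, hv0⟩
    have hvK : v ∈ Kᗮ := by
      rw [← Submodule.orthogonalProjectionOnto_eq_zero_iff (K := K)]
      exact Subtype.coe_injective hv0
    have hvorth : ∀ u ∈ K, inner ℝ u v = (0:ℝ) := (Submodule.mem_orthogonal K v).mp hvK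
    have hv : (v : S → ℝ) = 0 := by
      apply hcrit
      · intro h hh
        have hhK : (WithLp.toLp 2 h : E) ∈ K := by
          apply Submodule.span_mono (Set.subset_union_left (s := A) (t := B))
          rw [← hspanA, Submodule.mem_map_equiv] at hh
          exact hh
        have := hvorth _ hhK
        rw [PiLp.inner_apply] at this
        simpa [mul_comm] using this
      · exact hvΔ.1
      · intro j hjT
        have hj : EuclideanSpace.single j (1:ℝ) ∈ K :=
          Submodule.subset_span (Or.inr ⟨j, hjT, rfl⟩)
        have := hvorth _ hj
        rw [real_inner_comm, EuclideanSpace.inner_single_right] at this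
        simpa using this
    have hsum := hvΔ.2
    rw [show (v : S → ℝ) = (0 : S → ℝ) from hv] at hsum
    simp at hsum
  -- nearest point of C to 0
  obtain ⟨c, hcC, hcmin⟩ := exists_norm_eq_iInf_of_complete_convex hCne
    hCcompact.isComplete hCconv (0 : E)
  rw [norm_eq_iInf_iff_real_inner_le_zero hCconv hcC] at hcmin
  have hcne : c ≠ 0 := fun h => h0C (h ▸ hcC)
  have hkey : ∀ w ∈ C, ‖c‖^2 ≤ inner ℝ c w := by
    intro w hw
    have := hcmin w hw
    have h2 : inner ℝ (0 - c : E) (w - c) ≤ (0:ℝ) := this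
    rw [zero_sub, inner_neg_left, neg_nonpos, inner_sub_right] at h2
    have : inner ℝ c c ≤ (inner ℝ c w : ℝ) := by linarith
    rwa [real_inner_self_eq_norm_sq] at this
  have hcpos : ∀ i : S, 0 < c i := by
    intro i
    have heΔ : WithLp.toLp 2 (fun j => if j = i then (1:ℝ) else 0) ∈ Δ := by
      constructor
      · intro j; dsimp only; split <;> norm_num
      · simp
    have hfe : f (WithLp.toLp 2 (fun j => if j = i then (1:ℝ) else 0)) ∈ C := Set.mem_image_of_mem f heΔ
    have h1 : ‖c‖^2 ≤ inner ℝ c (f (WithLp.toLp 2 (fun j => if j = i then (1:ℝ) else 0))) := hkey _ hfe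
    have hcK : c ∈ K := by
      obtain ⟨v, _, rfl⟩ := hcC; exact hfK v
    have hsingle : WithLp.toLp 2 (fun j => if j = i then (1:ℝ) else 0) = EuclideanSpace.single i 1 := by
      ext j; simp [EuclideanSpace.single_apply]
    have h2 : (inner ℝ c (f (EuclideanSpace.single i 1)) : ℝ)
        = inner ℝ (f c : E) (EuclideanSpace.single i (1:ℝ)) := by
      rw [hf]
      exact (Submodule.inner_starProjection_left_eq_right K c (EuclideanSpace.single i 1)).symm
    have hfc : (f c : E) = c := (Submodule.starProjection_eq_self_iff).mpr hcK
    rw [hsingle] at h1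
    rw [h2, hfc, EuclideanSpace.inner_single_right] at h1
    have hcn : 0 < ‖c‖ := norm_pos_iff.mpr hcne
    have : (0:ℝ) < ‖c‖^2 := by positivity
    simpa using lt_of_lt_of_le this h1
  -- split c = h + w
  have hcK : c ∈ K := by obtain ⟨v, _, rfl⟩ := hcC; exact hfK v
  rw [hK, Submodule.span_union, Submodule.mem_sup] at hcK
  obtain ⟨h, hhA, w, hwB, hsum⟩ := hcK
  set Z : Submodule ℝ E :=
    { carrier := {v | ∀ i ∈ T, v i = 0}
      add_mem' := fun {a b} ha hb i hi => by change a.ofLp i + b.ofLp i = 0; simp [ha i hi, hb i hi]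
      zero_mem' := fun i _ => rfl
      smul_mem' := fun r v hv i hi => by change r * v.ofLp i = 0; simp [hv i hi] } with hZ
  have hwZ : w ∈ Z := by
    have : Submodule.span ℝ B ≤ Z := by
      rw [Submodule.span_le]
      rintro x ⟨j, hjT, rfl⟩ i hi
      have : i ≠ j := fun h => hjT (h ▸ hi)
      simp [EuclideanSpace.single_apply, this]
    exact this hwB
  refine ⟨h, by rw [← hspanA]; exact Submodule.mem_map_of_mem hhA, fun i hi => ?_⟩
  have : h i + w i = c i := by rw [← hsum]; rfl
  have hwi : w i = 0 := hwZ i hi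
  have := hcpos i
  linarith

lemma exists_int_combination (R : Finset (Reaction S)) (T : Set S)
    (h : S → ℝ) (hh : h ∈ stoichSubspace R) (hpos : ∀ i ∈ T, 0 < h i) :
    ∃ m : {r : Reaction S // r ∈ R} → ℤ,
      ∀ i ∈ T, 0 < ∑ r : {r : Reaction S // r ∈ R}, m r * ((r.1.2 i : ℤ) - (r.1.1 i : ℤ)) := by
  classical
  set ι := {r : Reaction S // r ∈ R}
  set w : ι → (S → ℝ) := fun r => fun i => ((r.1.2 i : ℝ) - (r.1.1 i : ℝ)) with hw
  have hrange : {v : S → ℝ | ∃ r ∈ R, v = fun i => ((r.2 i : ℝ) - (r.1 i : ℝ))} = Set.range w := by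
    ext x
    constructor
    · rintro ⟨r, hr, rfl⟩; exact ⟨⟨r, hr⟩, rfl⟩
    · rintro ⟨r, rfl⟩; exact ⟨r.1, r.2, rfl⟩
  rw [stoichSubspace, hrange, Submodule.mem_span_range_iff_exists_fun] at hh
  obtain ⟨μ, hμ⟩ := hh
  -- the continuous map
  set g : (ι → ℝ) → (S → ℝ) := fun ν => ∑ r : ι, ν r • w r with hg
  have hgcont : Continuous g := by
    apply continuous_finset_sum
    intro r _
    exact (continuous_apply r).smul continuous_const
  set U : Set (S → ℝ) := ⋂ i ∈ T, {x : S → ℝ | 0 < x i} with hU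
  have hUopen : IsOpen U := Set.Finite.isOpen_biInter (Set.toFinite T)
    (fun i _ => isOpen_lt continuous_const (continuous_apply i))
  have hgU : g μ ∈ U := by
    rw [hU]
    simp only [Set.mem_iInter]
    intro i hi
    have : g μ = h := hμ
    rw [this]
    exact hpos i hi
  have hOne : (g ⁻¹' U).Nonempty := ⟨μ, hgU⟩
  have hOopen : IsOpen (g ⁻¹' U) := hUopen.preimage hgcont
  -- density of rational vectors
  have hdense : DenseRange (fun (q : ι → ℚ) (r : ι) => (q r : ℝ)) := by
    have h1 : Dense (Set.pi Set.univ (fun _ : ι => Set.range ((↑) : ℚ → ℝ))) :=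
      dense_pi Set.univ (fun i _ => Rat.denseRange_cast)
    have h2 : Set.range (fun (q : ι → ℚ) (r : ι) => (q r : ℝ))
        = Set.pi Set.univ (fun _ : ι => Set.range ((↑) : ℚ → ℝ)) := by
      ext x
      constructor
      · rintro ⟨q, rfl⟩ i _; exact ⟨q i, rfl⟩
      · intro hx
        choose q hq using fun i => hx i (Set.mem_univ i)
        exact ⟨q, funext hq⟩
    rw [DenseRange, h2]; exact h1
  obtain ⟨q, hq⟩ := hdense.exists_mem_open hOopen hOne
  -- scale by common denominator
  set N : ℕ := ∏ r : ι, (q r).den with hN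
  have hNpos : 0 < N := Finset.prod_pos (fun r _ => (q r).pos)
  set m : ι → ℤ := fun r => (q r).num * ((N / (q r).den : ℕ) : ℤ) with hm
  have hmq : ∀ r : ι, (m r : ℝ) = (N : ℝ) * (q r : ℝ) := by
    intro r
    have hdvd : (q r).den ∣ N := Finset.dvd_prod_of_mem _ (Finset.mem_univ r)
    have hden : ((q r).den : ℝ) ≠ 0 := Nat.cast_ne_zero.mpr (q r).den_nz
    have h1 : ((N / (q r).den : ℕ) : ℝ) = (N : ℝ) / ((q r).den : ℝ) :=
      Nat.cast_div hdvd hden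
    have h2 : ((q r : ℚ) : ℝ) = ((q r).num : ℝ) / ((q r).den : ℝ) := by
      rw [Rat.cast_def]
    rw [hm]
    simp only [Int.cast_mul, Int.cast_natCast]
    rw [h1, h2]
    field_simp
  refine ⟨m, fun i hi => ?_⟩
  have hgq : 0 < g (fun r => (q r : ℝ)) i := by
    have h3 := hq
    rw [Set.mem_preimage, hU, Set.mem_iInter₂] at h3
    exact h3 i hi
  have hexp : ((∑ r : ι, m r * ((r.1.2 i : ℤ) - (r.1.1 i : ℤ)) : ℤ) : ℝ)
      = (N : ℝ) * g (fun r => (q r : ℝ)) i := by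
    rw [hg]
    push_cast
    rw [Finset.sum_apply, Finset.mul_sum]
    apply Finset.sum_congr rfl
    intro r _
    rw [Pi.smul_apply, smul_eq_mul]
    rw [show ((m r : ℝ)) = (N:ℝ) * (q r : ℝ) from hmq r]
    push_cast
    ring
  have : (0:ℝ) < ((∑ r : ι, m r * ((r.1.2 i : ℤ) - (r.1.1 i : ℤ)) : ℤ) : ℝ) := by
    rw [hexp]
    positivity
  exact_mod_cast this

open Classical in
lemma siphon_iff (R : Finset (Reaction S)) (T : Set S) (hwr : WeaklyReversible R)
    (hs : ∀ r ∈ R, (∃ i ∈ T, 0 < r.2 i) → ∃ j ∈ T, 0 < r.1 j)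
    {r : Reaction S} (hr : r ∈ R) :
    ((∃ i ∈ T, 0 < r.1 i) ↔ (∃ i ∈ T, 0 < r.2 i)) := by
  constructor
  · intro h1
    obtain ⟨n, c, hc0, hclast, hstep⟩ := hwr r hr
    have key : ∀ k : ℕ, ∀ hk : k < n + 1, (∃ i ∈ T, 0 < c ⟨k, hk⟩ i) → ∃ i ∈ T, 0 < c 0 i := by
      intro k
      induction k with
      | zero => intro hk h; exact h
      | succ k ih =>
        intro hk h
        have hk' : k < n := Nat.lt_of_succ_lt_succ hk
        have hst := hstep ⟨k, hk'⟩
        have : ∃ j ∈ T, 0 < (c (⟨k, hk'⟩ : Fin n).castSucc) j := by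
          apply hs _ hst
          exact h
        exact ih (Nat.lt_of_lt_of_le hk' (Nat.le_succ n)) this
    have hlast : ∃ i ∈ T, 0 < c (Fin.last n) i := by rw [hclast]; exact h1
    have := key n (Nat.lt_succ_self n) hlast
    rwa [hc0] at this
  · exact hs r hr


open MvPolynomial in
lemma eval_ker (R : Finset (Reaction S)) (z : S → ℂ)
    (hz : ∀ r ∈ R, (∏ i, z i ^ r.1 i) = ∏ i, z i ^ r.2 i) :
    associatedIdeal R ≤ RingHom.ker (eval z) := by
  rw [associatedIdeal, Ideal.span_le]
  rintro f ⟨r, hr, rfl⟩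
  simp only [SetLike.mem_coe, RingHom.mem_ker, map_sub, map_prod, map_pow, eval_X]
  rw [hz r hr]
  ring


open MvPolynomial in
theorem stmt6 (R : Finset (Reaction S)) (hwr : WeaklyReversible R)
    (hprime : (associatedIdeal R).IsPrime) :
    ∀ T : Set S, ¬ IsCriticalSiphon R T := by
  classical
  rintro T ⟨⟨hTne, hsiphon⟩, hcrit⟩
  obtain ⟨h, hh, hpos⟩ := exists_pos_combination R T hTne hcrit
  obtain ⟨m, hm⟩ := exists_int_combination R T h hh hpos
  obtain ⟨a, b, hab, hmem⟩ := binom_mem_of_int R m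
  have habT : ∀ i ∈ T, b i < a i := by
    intro i hi
    have h1 := hm i hi
    rw [← hab i] at h1
    omega
  set c : S → ℕ := fun i => min (a i) (b i) with hc
  set u : S → ℕ := fun i => a i - c i with hu
  set v : S → ℕ := fun i => b i - c i with hv
  have hau : ∀ i, a i = c i + u i := fun i =>
    (Nat.add_sub_cancel' (min_le_left _ _)).symm
  have hbv : ∀ i, b i = c i + v i := fun i =>
    (Nat.add_sub_cancel' (min_le_right _ _)).symm
  have hfac : ((∏ i, X i ^ a i) - ∏ i, X i ^ b i : MvPolynomial S ℂ)
      = (∏ i, X i ^ c i) * ((∏ i, X i ^ u i) - ∏ i, X i ^ v i) := by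
    have h1 : (∏ i, X i ^ a i : MvPolynomial S ℂ)
        = (∏ i, X i ^ c i) * ∏ i, X i ^ u i := by
      rw [← Finset.prod_mul_distrib]
      exact Finset.prod_congr rfl fun i _ => by rw [hau i, pow_add]
    have h2 : (∏ i, X i ^ b i : MvPolynomial S ℂ)
        = (∏ i, X i ^ c i) * ∏ i, X i ^ v i := by
      rw [← Finset.prod_mul_distrib]
      exact Finset.prod_congr rfl fun i _ => by rw [hbv i, pow_add]
    rw [h1, h2]
    ring
  rw [hfac] at hmem
  have hones : associatedIdeal R ≤ RingHom.ker (eval (fun _ : S => (1:ℂ))) := by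
    apply eval_ker
    intro r hr
    simp
  have hmon : (∏ i, X i ^ c i : MvPolynomial S ℂ) ∉ associatedIdeal R := by
    intro hcmem
    have h0 := hones hcmem
    simp [RingHom.mem_ker] at h0
  have hg : ((∏ i, X i ^ u i) - ∏ i, X i ^ v i : MvPolynomial S ℂ) ∈ associatedIdeal R :=
    (hprime.mem_or_mem hmem).resolve_left hmon
  set z : S → ℂ := fun i => if i ∈ T then 0 else 1 with hz
  have key : ∀ y : S → ℕ, (∏ i, z i ^ y i) = if (∃ i ∈ T, 0 < y i) then (0:ℂ) else 1 := by
    intro y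
    split
    · next hex =>
      obtain ⟨i, hiT, hyi⟩ := hex
      apply Finset.prod_eq_zero (Finset.mem_univ i)
      rw [show z i = 0 from if_pos hiT, zero_pow hyi.ne']
    · next hex =>
      push_neg at hex
      apply Finset.prod_eq_one
      intro i _
      by_cases hiT : i ∈ T
      · rw [show y i = 0 by have := hex i hiT; omega, pow_zero]
      · rw [show z i = 1 from if_neg hiT, one_pow]
  have hzr : ∀ r ∈ R, (∏ i, z i ^ r.1 i) = ∏ i, z i ^ r.2 i := by
    intro r hr
    rw [key, key, if_congr (siphon_iff R T hwr hsiphon hr) rfl rfl]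
  have hzker := eval_ker R z hzr
  have hzero := hzker hg
  rw [RingHom.mem_ker, map_sub] at hzero
  obtain ⟨i₀, hi₀⟩ := hTne
  have hu0 : eval z (∏ i, X i ^ u i : MvPolynomial S ℂ) = 0 := by
    simp only [map_prod, map_pow, eval_X]
    apply Finset.prod_eq_zero (Finset.mem_univ i₀)
    have hup : 0 < u i₀ := by
      have := habT i₀ hi₀
      simp only [hu, hc]
      omega
    rw [show z i₀ = 0 from if_pos hi₀, zero_pow hup.ne']
  have hv1 : eval z (∏ i, X i ^ v i : MvPolynomial S ℂ) = 1 := by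
    simp only [map_prod, map_pow, eval_X]
    apply Finset.prod_eq_one
    intro i _
    by_cases hiT : i ∈ T
    · have hv0 : v i = 0 := by
        have := habT i hiT
        simp only [hv, hc]
        omega
      rw [hv0, pow_zero]
    · rw [show z i = 1 from if_neg hiT, one_pow]
  rw [hu0, hv1] at hzero
  norm_num at hzero
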